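/- Under the permutation null distribution, the variance of β equals {2A·f₁(n) + 4B·f₂(n) + C·f₃(n)}/(n²(n−1)²) − k̄², where f₁(x) = x(x−1)/(N(N−1)), f₂(x) = x(x−1)(x−2)/(N(N−1)(N−2)), f₃(x) = x(x−1)(x−2)(x−3)/(N(N−1)(N−2)(N−3)), A = Σ_{i≠j} k_{ij}², B = Σ over triples of pairwise distinct indices (i,j,u) of k_{ij}k_{iu}, and C = Σ over quadruples of pairwise distinct indices (i,j,u,v) of k_{ij}k_{uv}. -/

import Mathlib

open Finset Matrix Asymptotics

/-- Expectation under the permutation null distribution: uniform over all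
`N.choose m` subsets `S ⊆ {1,…,N}` of size `m`. -/
noncomputable def pexp (N m : ℕ) (f : Finset (Fin N) → ℝ) : ℝ :=
  (∑ S ∈ Finset.powersetCard m (Finset.univ : Finset (Fin N)), f S) / (N.choose m)

/-- Variance under the permutation null distribution. -/
noncomputable def pvar (N m : ℕ) (f : Finset (Fin N) → ℝ) : ℝ :=
  pexp N m (fun S => (f S - pexp N m f) ^ 2)

/-- Covariance under the permutation null distribution. -/
noncomputable def pcov (N m : ℕ) (f g : Finset (Fin N) → ℝ) : ℝ :=
  pexp N m (fun S => (f S - pexp N m f) * (g S - pexp N m g))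

/-- `α(S) = (m(m−1))⁻¹ Σ_{i,j∈S, i≠j} k_{ij}`. -/
noncomputable def alphaStat (N m : ℕ) (k : Fin N → Fin N → ℝ) (S : Finset (Fin N)) : ℝ :=
  ((m : ℝ) * ((m : ℝ) - 1))⁻¹ * ∑ i ∈ S, ∑ j ∈ S.erase i, k i j

/-- `β(S) = (n(n−1))⁻¹ Σ_{i,j∉S, i≠j} k_{ij}`. -/
noncomputable def betaStat (N n : ℕ) (k : Fin N → Fin N → ℝ) (S : Finset (Fin N)) : ℝ :=
  ((n : ℝ) * ((n : ℝ) - 1))⁻¹ * ∑ i ∈ Sᶜ, ∑ j ∈ Sᶜ.erase i, k i j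

/-- `γ(S) = (mn)⁻¹ Σ_{i∈S, j∉S} k_{ij}`. -/
noncomputable def gammaStat (N m n : ℕ) (k : Fin N → Fin N → ℝ) (S : Finset (Fin N)) : ℝ :=
  ((m : ℝ) * (n : ℝ))⁻¹ * ∑ i ∈ S, ∑ j ∈ Sᶜ, k i j

/-- `k̄ = (N(N−1))⁻¹ Σ_{i≠j} k_{ij}`. -/
noncomputable def kbar (N : ℕ) (k : Fin N → Fin N → ℝ) : ℝ :=
  ((N : ℝ) * ((N : ℝ) - 1))⁻¹ *
    ∑ i : Fin N, ∑ j ∈ (Finset.univ : Finset (Fin N)).erase i, k i j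

/-- `A = Σ_{i≠j} k_{ij}²`. -/
noncomputable def kA (N : ℕ) (k : Fin N → Fin N → ℝ) : ℝ :=
  ∑ i : Fin N, ∑ j ∈ (Finset.univ : Finset (Fin N)).erase i, (k i j) ^ 2

/-- `B = Σ_{(i,j,u) pairwise distinct} k_{ij} k_{iu}`. -/
noncomputable def kB (N : ℕ) (k : Fin N → Fin N → ℝ) : ℝ :=
  ∑ i : Fin N, ∑ j ∈ (Finset.univ : Finset (Fin N)).erase i,
    ∑ u ∈ ((Finset.univ : Finset (Fin N)).erase i).erase j, k i j * k i u

/-- `C = Σ_{(i,j,u,v) pairwise distinct} k_{ij} k_{uv}`. -/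
noncomputable def kC (N : ℕ) (k : Fin N → Fin N → ℝ) : ℝ :=
  ∑ i : Fin N, ∑ j ∈ (Finset.univ : Finset (Fin N)).erase i,
    ∑ u ∈ ((Finset.univ : Finset (Fin N)).erase i).erase j,
      ∑ v ∈ (((Finset.univ : Finset (Fin N)).erase i).erase j).erase u, k i j * k u v

/-- `W(S) = mα(S)/N + nβ(S)/N`. -/
noncomputable def Wstat (N m n : ℕ) (k : Fin N → Fin N → ℝ) (S : Finset (Fin N)) : ℝ :=
  (m : ℝ) * alphaStat N m k S / (N : ℝ) + (n : ℝ) * betaStat N n k S / (N : ℝ)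

/-- `D(S) = m(m−1)α(S) − n(n−1)β(S)`. -/
noncomputable def Dstat (N m n : ℕ) (k : Fin N → Fin N → ℝ) (S : Finset (Fin N)) : ℝ :=
  (m : ℝ) * ((m : ℝ) - 1) * alphaStat N m k S - (n : ℝ) * ((n : ℝ) - 1) * betaStat N n k S

/-- Centered row sums `k̃_{i·} = Σ_{j≠i} (k_{ij} − k̄)`. -/
noncomputable def krow (N : ℕ) (k : Fin N → Fin N → ℝ) (i : Fin N) : ℝ :=
  ∑ j ∈ (Finset.univ : Finset (Fin N)).erase i, (k i j - kbar N k)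

/-- Weighted version `W_r(S) = r·mα(S)/N + nβ(S)/N`. -/
noncomputable def Wrstat (N m n : ℕ) (r : ℝ) (k : Fin N → Fin N → ℝ) (S : Finset (Fin N)) : ℝ :=
  r * ((m : ℝ) * alphaStat N m k S) / (N : ℝ) + (n : ℝ) * betaStat N n k S / (N : ℝ)


namespace PermNullAux

open Finset

noncomputable def chi {N : ℕ} (S : Finset (Fin N)) (i : Fin N) : ℝ := if i ∈ S then 0 else 1

lemma sum_chi {N : ℕ} (S t : Finset (Fin N)) (g : Fin N → ℝ) :
    ∑ i ∈ t, chi S i * g i = ∑ i ∈ t \ S, g i := by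
  rw [Finset.sdiff_eq_filter, Finset.sum_filter]
  refine Finset.sum_congr rfl fun i _ => ?_
  by_cases h : i ∈ S <;> simp [chi, h]

lemma chi_pair {N : ℕ} (S : Finset (Fin N)) (i j : Fin N) (c : ℝ) :
    chi S i * chi S j * c = (if Disjoint ({i, j} : Finset (Fin N)) S then (1:ℝ) else 0) * c := by
  by_cases hi : i ∈ S <;> by_cases hj : j ∈ S <;>
    simp [chi, hi, hj, Finset.disjoint_left]

lemma chi_quad {N : ℕ} (S : Finset (Fin N)) (i j u v : Fin N) (c d : ℝ) :
    (chi S i * chi S j * c) * (chi S u * chi S v * d)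
      = (if Disjoint ({i, j, u, v} : Finset (Fin N)) S then (1:ℝ) else 0) * (c * d) := by
  by_cases hi : i ∈ S <;> by_cases hj : j ∈ S <;> by_cases hu : u ∈ S <;> by_cases hv : v ∈ S <;>
    simp [chi, hi, hj, hu, hv, Finset.disjoint_left] <;> ring

lemma sum_ind (N m : ℕ) (T : Finset (Fin N)) :
    ∑ S ∈ Finset.powersetCard m (univ : Finset (Fin N)),
        (if Disjoint T S then (1:ℝ) else 0) = ((N - T.card).choose m : ℕ) := by
  classical
  rw [Finset.sum_boole]
  have h : (Finset.powersetCard m (univ : Finset (Fin N))).filter (fun S => Disjoint T S)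
      = Finset.powersetCard m Tᶜ := by
    ext S
    simp only [Finset.mem_filter, Finset.mem_powersetCard, Finset.subset_univ, true_and]
    constructor
    · rintro ⟨hc, hd⟩
      refine ⟨fun x hx => Finset.mem_compl.mpr fun hxT => ?_, hc⟩
      exact (Finset.disjoint_left.mp hd) hxT hx
    · rintro ⟨hsub, hc⟩
      refine ⟨hc, Finset.disjoint_left.mpr fun x hxT hxS => ?_⟩
      exact (Finset.mem_compl.mp (hsub hxS)) hxT
  rw [h, Finset.card_powersetCard, Finset.card_compl]
  simp

lemma pvar_eq (N m : ℕ) (hm : m ≤ N) (f : Finset (Fin N) → ℝ) :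
    pvar N m f = pexp N m (fun S => f S ^ 2) - (pexp N m f) ^ 2 := by
  have hc : ((N.choose m : ℕ) : ℝ) ≠ 0 :=
    Nat.cast_ne_zero.mpr (Nat.choose_pos hm).ne'
  have hcard : (((Finset.powersetCard m (univ : Finset (Fin N))).card : ℕ) : ℝ)
      = (N.choose m : ℕ) := by
    rw [Finset.card_powersetCard]; simp
  set e := pexp N m f with he
  have hsum : ∑ S ∈ Finset.powersetCard m (univ : Finset (Fin N)), f S = e * N.choose m := by
    rw [he, pexp]; field_simp
  have expand : ∑ S ∈ Finset.powersetCard m (univ : Finset (Fin N)), (f S - e) ^ 2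
      = (∑ S ∈ Finset.powersetCard m (univ : Finset (Fin N)), f S ^ 2)
        - 2 * e * (e * N.choose m) + (N.choose m : ℝ) * e ^ 2 := by
    simp_rw [sub_sq]
    rw [Finset.sum_add_distrib, Finset.sum_sub_distrib, Finset.sum_const, nsmul_eq_mul, hcard]
    have h2 : ∑ S ∈ Finset.powersetCard m (univ : Finset (Fin N)), 2 * f S * e
        = 2 * e * (e * N.choose m) := by
      have h3 : ∀ S : Finset (Fin N), 2 * f S * e = (2 * e) * f S := fun S => by ring
      simp_rw [h3]
      rw [← Finset.mul_sum, hsum]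
    rw [h2]
  have h1 : pvar N m f
      = (∑ S ∈ Finset.powersetCard m (univ : Finset (Fin N)), (f S - e) ^ 2) / (N.choose m) := rfl
  have h3 : pexp N m (fun S => f S ^ 2)
      = (∑ S ∈ Finset.powersetCard m (univ : Finset (Fin N)), f S ^ 2) / (N.choose m) := rfl
  rw [h1, expand, h3]
  field_simp
  ring

lemma sum_pair_swap {M : Type*} [AddCommMonoid M] (N : ℕ) (F : Fin N → Fin N → M) :
    ∑ i : Fin N, ∑ j ∈ (univ : Finset (Fin N)).erase i, F i j
      = ∑ i : Fin N, ∑ j ∈ (univ : Finset (Fin N)).erase i, F j i := by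
  have h : ∀ (G : Fin N → Fin N → M), ∑ i : Fin N, ∑ j ∈ (univ : Finset (Fin N)).erase i, G i j
      = ∑ i : Fin N, ∑ j : Fin N, if j ≠ i then G i j else 0 := by
    intro G
    refine Finset.sum_congr rfl fun i _ => ?_
    rw [← Finset.filter_ne' univ i, Finset.sum_filter]
  rw [h, h, Finset.sum_comm]
  refine Finset.sum_congr rfl fun a _ => Finset.sum_congr rfl fun b _ => ?_
  by_cases hab : a = b <;> simp [hab, eq_comm]

lemma card3 {N : ℕ} (a b c : Fin N) (hab : a ≠ b) (hac : a ≠ c) (hbc : b ≠ c) :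
    ({a, b, c} : Finset (Fin N)).card = 3 := by
  rw [Finset.card_insert_of_notMem (by simp [hab, hac]), Finset.card_pair hbc]

lemma card4 {N : ℕ} (a b c d : Fin N) (hab : a ≠ b) (hac : a ≠ c) (had : a ≠ d)
    (hbc : b ≠ c) (hbd : b ≠ d) (hcd : c ≠ d) :
    ({a, b, c, d} : Finset (Fin N)).card = 4 := by
  rw [Finset.card_insert_of_notMem (by simp [hab, hac, had]), card3 b c d hbc hbd hcd]

lemma choose_mul_eq (x y : ℕ) (hy : 1 ≤ y) : x.choose y * y = x * (x - 1).choose (y - 1) := by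
  rcases Nat.eq_zero_or_pos x with hx | hx
  · subst hx; simp [Nat.choose_eq_zero_of_lt hy]
  obtain ⟨x', rfl⟩ : ∃ x', x = x' + 1 := ⟨x - 1, by omega⟩
  obtain ⟨y', rfl⟩ : ∃ y', y = y' + 1 := ⟨y - 1, by omega⟩
  simp only [Nat.add_sub_cancel]
  rw [mul_comm (x' + 1) _, ← Nat.add_one_mul_choose_eq, mul_comm]

lemma desc_choose (a b : ℕ) (t : ℕ) (ht : t ≤ b) :
    a.choose b * b.descFactorial t = a.descFactorial t * (a - t).choose (b - t) := by
  induction t with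
  | zero => simp
  | succ s ih =>
    have hs : s ≤ b := by omega
    rw [Nat.descFactorial_succ, Nat.descFactorial_succ, ← mul_assoc, mul_comm (a.choose b) (b - s),
      mul_assoc, mul_comm (b - s), ih hs, mul_assoc,
      choose_mul_eq (a - s) (b - s) (by omega)]
    have h1 : a - s - 1 = a - (s + 1) := by omega
    have h2 : b - s - 1 = b - (s + 1) := by omega
    rw [h1, h2]; ring

lemma descPoch_eval (x : ℝ) (t : ℕ) :
    (descPochhammer ℝ t).eval x = ∏ i ∈ Finset.range t, (x - i) := by
  induction t with
  | zero => simp [descPochhammer]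
  | succ s ih =>
    rw [descPochhammer_succ_right, Finset.prod_range_succ, ← ih]
    simp [Polynomial.eval_mul]

lemma descCast (n t : ℕ) :
    (n.descFactorial t : ℝ) = ∏ i ∈ Finset.range t, ((n : ℝ) - i) := by
  rw [← descPochhammer_eval_eq_descFactorial ℝ n t, descPoch_eval]

lemma ratioR (m n t : ℕ) (hmn : t ≤ n) :
    (((m + n - t).choose m : ℕ) : ℝ) * ∏ i ∈ Finset.range t, (((m : ℝ) + n) - i)
      = (((m + n).choose m : ℕ) : ℝ) * ∏ i ∈ Finset.range t, ((n : ℝ) - i) := by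
  have e1 : (m + n).choose n = (m + n).choose m := by
    rw [← Nat.choose_symm (Nat.le_add_right m n)]; congr 1; omega
  have e2 : (m + n - t).choose (n - t) = (m + n - t).choose m := by
    rw [← Nat.choose_symm (show m ≤ m + n - t by omega)]; congr 1; omega
  have h := desc_choose (m + n) n t hmn
  rw [e1, e2] at h
  have h2 := congrArg (Nat.cast : ℕ → ℝ) h
  push_cast [descCast] at h2
  linarith [h2]

lemma ratioDiv (m n t : ℕ) (hm : 2 ≤ m) (hn : 2 ≤ n) (ht4 : t ≤ 4) :
    (((m + n - t).choose m : ℕ) : ℝ) / (((m + n).choose m : ℕ) : ℝ)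
      = (∏ i ∈ Finset.range t, ((n : ℝ) - i)) / ∏ i ∈ Finset.range t, (((m : ℝ) + n) - i) := by
  have hP : (∏ i ∈ Finset.range t, (((m : ℝ) + n) - i)) ≠ 0 := by
    refine Finset.prod_ne_zero_iff.mpr fun i hi => ?_
    have h1 : i < t := Finset.mem_range.mp hi
    have h2 : (i : ℝ) < (m : ℝ) + n := by
      have : i < m + n := by omega
      exact_mod_cast this
    linarith
  have hb : (((m + n).choose m : ℕ) : ℝ) ≠ 0 :=
    Nat.cast_ne_zero.mpr (Nat.choose_pos (Nat.le_add_right m n)).ne'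
  by_cases hmn : t ≤ n
  · rw [div_eq_div_iff hb hP]
    linarith [ratioR m n t hmn]
  · have hz : (m + n - t).choose m = 0 := Nat.choose_eq_zero_of_lt (by omega)
    have hz2 : (∏ i ∈ Finset.range t, ((n : ℝ) - i)) = 0 :=
      Finset.prod_eq_zero (Finset.mem_range.mpr (by omega : n < t)) (by simp)
    rw [hz, hz2]; simp

lemma beta_chi (N n : ℕ) (k : Fin N → Fin N → ℝ) (S : Finset (Fin N)) :
    betaStat N n k S = ((n : ℝ) * ((n : ℝ) - 1))⁻¹ *
      ∑ i : Fin N, ∑ j ∈ (univ : Finset (Fin N)).erase i, chi S i * chi S j * k i j := by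
  unfold betaStat
  congr 1
  have h1 : ∀ i : Fin N, ∑ j ∈ (univ : Finset (Fin N)).erase i, chi S j * k i j
      = ∑ j ∈ Sᶜ.erase i, k i j := by
    intro i
    rw [sum_chi]
    congr 1
    ext x
    simp only [Finset.mem_sdiff, Finset.mem_erase, Finset.mem_univ, Finset.mem_compl, true_and]
    tauto
  have h2 : ∀ i : Fin N, ∑ j ∈ (univ : Finset (Fin N)).erase i, chi S i * chi S j * k i j
      = chi S i * ∑ j ∈ Sᶜ.erase i, k i j := by
    intro i
    rw [← h1 i, Finset.mul_sum]
    exact Finset.sum_congr rfl fun j _ => by ring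
  rw [show ∑ i : Fin N, ∑ j ∈ (univ : Finset (Fin N)).erase i, chi S i * chi S j * k i j
      = ∑ i : Fin N, chi S i * ∑ j ∈ Sᶜ.erase i, k i j from Finset.sum_congr rfl fun i _ => h2 i]
  rw [sum_chi, ← Finset.compl_eq_univ_sdiff]

lemma pexp_beta (m n : ℕ) (hm : 2 ≤ m) (hn : 2 ≤ n) (k : Fin (m+n) → Fin (m+n) → ℝ) :
    pexp (m + n) m (betaStat (m + n) n k) = kbar (m + n) k := by
  classical
  have key : ∑ S ∈ Finset.powersetCard m (univ : Finset (Fin (m+n))), betaStat (m+n) n k S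
      = ((n : ℝ) * ((n : ℝ) - 1))⁻¹ * ((((m+n) - 2).choose m : ℕ) : ℝ)
        * ∑ i : Fin (m+n), ∑ j ∈ (univ : Finset (Fin (m+n))).erase i, k i j := by
    simp_rw [beta_chi (m+n) n k]
    rw [← Finset.mul_sum, mul_assoc]
    congr 1
    rw [Finset.sum_comm, Finset.mul_sum]
    refine Finset.sum_congr rfl fun i _ => ?_
    rw [Finset.sum_comm, Finset.mul_sum]
    refine Finset.sum_congr rfl fun j hj => ?_
    have hji : j ≠ i := (Finset.mem_erase.mp hj).1
    simp_rw [chi_pair]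
    rw [← Finset.sum_mul, sum_ind, Finset.card_pair hji.symm]
  have p2n : ∏ i ∈ Finset.range 2, ((n:ℝ) - i) = (n:ℝ) * ((n:ℝ) - 1) := by
    simp [Finset.prod_range_succ]
  have p2N : ∏ i ∈ Finset.range 2, (((m:ℝ) + n) - i) = ((m:ℝ)+n) * (((m:ℝ)+n) - 1) := by
    simp [Finset.prod_range_succ]
  have hr : ((((m+n) - 2).choose m : ℕ) : ℝ) * (((m:ℝ)+n) * (((m:ℝ)+n) - 1))
      = (((m+n).choose m : ℕ) : ℝ) * ((n:ℝ) * ((n:ℝ) - 1)) := by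
    have h := ratioR m n 2 hn
    rw [p2n, p2N] at h
    exact h
  have hchoose : (((m+n).choose m : ℕ) : ℝ) ≠ 0 :=
    Nat.cast_ne_zero.mpr (Nat.choose_pos (Nat.le_add_right m n)).ne'
  have hnn : (n:ℝ) * ((n:ℝ) - 1) ≠ 0 := by
    have h1 : (2:ℝ) ≤ (n:ℝ) := by exact_mod_cast hn
    intro h; rcases mul_eq_zero.mp h with h | h <;> linarith
  have hNN : ((m:ℝ)+n) * (((m:ℝ)+n) - 1) ≠ 0 := by
    have h1 : (2:ℝ) ≤ (m:ℝ) := by exact_mod_cast hm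
    have h2 : (0:ℝ) ≤ (n:ℝ) := by positivity
    intro h; rcases mul_eq_zero.mp h with h | h <;> linarith
  have hcast : ((m + n : ℕ) : ℝ) = (m : ℝ) + n := by push_cast; ring
  have hs : ((n:ℝ) * ((n:ℝ) - 1))⁻¹ * ((((m+n) - 2).choose m : ℕ) : ℝ) / (((m+n).choose m : ℕ) : ℝ)
      = (((m:ℝ)+n) * (((m:ℝ)+n) - 1))⁻¹ := by
    have hn1 : (n:ℝ) - 1 ≠ 0 := fun h => hnn (by rw [h, mul_zero])
    have hN1 : ((m:ℝ)+n) - 1 ≠ 0 := fun h => hNN (by rw [h, mul_zero])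
    field_simp
    linear_combination hr
  rw [pexp, key, kbar, hcast]
  calc (((n:ℝ) * ((n:ℝ) - 1))⁻¹ * ((((m+n) - 2).choose m : ℕ) : ℝ)
        * ∑ i : Fin (m+n), ∑ j ∈ (univ : Finset (Fin (m+n))).erase i, k i j)
          / (((m+n).choose m : ℕ) : ℝ)
      = (((n:ℝ) * ((n:ℝ) - 1))⁻¹ * ((((m+n) - 2).choose m : ℕ) : ℝ) / (((m+n).choose m : ℕ) : ℝ))
        * ∑ i : Fin (m+n), ∑ j ∈ (univ : Finset (Fin (m+n))).erase i, k i j := by ring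
    _ = (((m:ℝ)+n) * (((m:ℝ)+n) - 1))⁻¹
        * ∑ i : Fin (m+n), ∑ j ∈ (univ : Finset (Fin (m+n))).erase i, k i j := by rw [hs]

lemma quad_split (N : ℕ) (k : Fin N → Fin N → ℝ) (hsym : ∀ i j, k i j = k j i) (g : ℕ → ℝ) :
    ∑ i : Fin N, ∑ j ∈ (univ : Finset (Fin N)).erase i, ∑ u : Fin N,
        ∑ v ∈ (univ : Finset (Fin N)).erase u,
        k i j * k u v * g (({i, j, u, v} : Finset (Fin N)).card)
      = 2 * kA N k * g 2 + 4 * kB N k * g 3 + kC N k * g 4 := by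
  classical
  have inner : ∀ i j : Fin N, j ≠ i →
      ∑ u : Fin N, ∑ v ∈ (univ : Finset (Fin N)).erase u,
          k i j * k u v * g (({i, j, u, v} : Finset (Fin N)).card)
        = k i j * k i j * g 2 + k i j * k j i * g 2
          + (∑ v ∈ ((univ : Finset (Fin N)).erase i).erase j, k i j * k i v) * g 3
          + (∑ v ∈ ((univ : Finset (Fin N)).erase i).erase j, k i j * k j v) * g 3
          + (∑ u ∈ ((univ : Finset (Fin N)).erase i).erase j, k i j * k u i) * g 3
          + (∑ u ∈ ((univ : Finset (Fin N)).erase i).erase j, k i j * k u j) * g 3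
          + ∑ u ∈ ((univ : Finset (Fin N)).erase i).erase j,
              ∑ v ∈ (((univ : Finset (Fin N)).erase i).erase j).erase u,
                k i j * k u v * g 4 := by
    intro i j hji
    have hij : i ≠ j := hji.symm
    have hjmem : j ∈ (univ : Finset (Fin N)).erase i := Finset.mem_erase.mpr ⟨hji, Finset.mem_univ j⟩
    have himem : i ∈ (univ : Finset (Fin N)).erase j := Finset.mem_erase.mpr ⟨hij, Finset.mem_univ i⟩
    have hGi : ∑ v ∈ (univ : Finset (Fin N)).erase i,
        k i j * k i v * g (({i, j, i, v} : Finset (Fin N)).card)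
        = k i j * k i j * g 2
          + ∑ v ∈ ((univ : Finset (Fin N)).erase i).erase j, k i j * k i v * g 3 := by
      rw [← Finset.add_sum_erase _ _ hjmem]
      congr 1
      · have hset : ({i, j, i, j} : Finset (Fin N)) = {i, j} := by
          ext x; simp; try tauto
        rw [hset, Finset.card_pair hij]
      · refine Finset.sum_congr rfl fun v hv => ?_
        obtain ⟨hvj, hvi, -⟩ :
            v ≠ j ∧ v ≠ i ∧ v ∈ (univ : Finset (Fin N)) := by
          have h1 := Finset.mem_erase.mp hv
          have h2 := Finset.mem_erase.mp h1.2
          exact ⟨h1.1, h2.1, h2.2⟩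
        have hset : ({i, j, i, v} : Finset (Fin N)) = {i, j, v} := by
          ext x; simp; try tauto
        rw [hset, card3 i j v hij hvi.symm hvj.symm]
    have hGj : ∑ v ∈ (univ : Finset (Fin N)).erase j,
        k i j * k j v * g (({i, j, j, v} : Finset (Fin N)).card)
        = k i j * k j i * g 2
          + ∑ v ∈ ((univ : Finset (Fin N)).erase i).erase j, k i j * k j v * g 3 := by
      rw [← Finset.add_sum_erase _ _ himem]
      congr 1
      · have hset : ({i, j, j, i} : Finset (Fin N)) = {i, j} := by
          ext x; simp; try tauto
        rw [hset, Finset.card_pair hij]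
      · rw [Finset.erase_right_comm]
        refine Finset.sum_congr rfl fun v hv => ?_
        obtain ⟨hvj, hvi, -⟩ :
            v ≠ j ∧ v ≠ i ∧ v ∈ (univ : Finset (Fin N)) := by
          have h1 := Finset.mem_erase.mp hv
          have h2 := Finset.mem_erase.mp h1.2
          exact ⟨h1.1, h2.1, h2.2⟩
        have hset : ({i, j, j, v} : Finset (Fin N)) = {i, j, v} := by
          ext x; simp; try tauto
        rw [hset, card3 i j v hij hvi.symm hvj.symm]
    have hGu : ∀ u ∈ ((univ : Finset (Fin N)).erase i).erase j,
        ∑ v ∈ (univ : Finset (Fin N)).erase u,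
          k i j * k u v * g (({i, j, u, v} : Finset (Fin N)).card)
        = k i j * k u i * g 3 + k i j * k u j * g 3
          + ∑ v ∈ (((univ : Finset (Fin N)).erase i).erase j).erase u,
              k i j * k u v * g 4 := by
      intro u hu
      obtain ⟨huj, hui, -⟩ :
          u ≠ j ∧ u ≠ i ∧ u ∈ (univ : Finset (Fin N)) := by
        have h1 := Finset.mem_erase.mp hu
        have h2 := Finset.mem_erase.mp h1.2
        exact ⟨h1.1, h2.1, h2.2⟩
      have himem2 : i ∈ (univ : Finset (Fin N)).erase u :=
        Finset.mem_erase.mpr ⟨hui.symm, Finset.mem_univ i⟩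
      have hjmem2 : j ∈ ((univ : Finset (Fin N)).erase u).erase i :=
        Finset.mem_erase.mpr ⟨hji, Finset.mem_erase.mpr ⟨huj.symm, Finset.mem_univ j⟩⟩
      rw [← Finset.add_sum_erase _ _ himem2, ← Finset.add_sum_erase _ _ hjmem2]
      have hc1 : ({i, j, u, i} : Finset (Fin N)) = {i, j, u} := by ext x; simp; try tauto
      have hc2 : ({i, j, u, j} : Finset (Fin N)) = {i, j, u} := by ext x; simp; try tauto
      rw [hc1, hc2, card3 i j u hij hui.symm huj.symm]
      have hseteq : (((univ : Finset (Fin N)).erase u).erase i).erase j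
          = (((univ : Finset (Fin N)).erase i).erase j).erase u := by
        rw [Finset.erase_right_comm (a := u) (b := i)]
        exact Finset.erase_right_comm
      rw [hseteq]
      have hrest : ∑ v ∈ (((univ : Finset (Fin N)).erase i).erase j).erase u,
          k i j * k u v * g (({i, j, u, v} : Finset (Fin N)).card)
          = ∑ v ∈ (((univ : Finset (Fin N)).erase i).erase j).erase u,
              k i j * k u v * g 4 := by
        refine Finset.sum_congr rfl fun v hv => ?_
        obtain ⟨hvu, hvj, hvi⟩ :
            v ≠ u ∧ v ≠ j ∧ v ≠ i := by
          have h1 := Finset.mem_erase.mp hv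
          have h2 := Finset.mem_erase.mp h1.2
          have h3 := Finset.mem_erase.mp h2.2
          exact ⟨h1.1, h2.1, h3.1⟩
        rw [card4 i j u v hij hui.symm hvi.symm huj.symm hvj.symm hvu.symm]
      rw [hrest]
      ring
    rw [← Finset.add_sum_erase _
        (fun u => ∑ v ∈ (univ : Finset (Fin N)).erase u,
          k i j * k u v * g (({i, j, u, v} : Finset (Fin N)).card)) (Finset.mem_univ i),
      ← Finset.add_sum_erase _
        (fun u => ∑ v ∈ (univ : Finset (Fin N)).erase u,
          k i j * k u v * g (({i, j, u, v} : Finset (Fin N)).card)) hjmem]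
    rw [hGi, hGj, Finset.sum_congr rfl hGu, Finset.sum_add_distrib, Finset.sum_add_distrib]
    simp only [← Finset.sum_mul]
    ring
  have step : ∑ i : Fin N, ∑ j ∈ (univ : Finset (Fin N)).erase i, ∑ u : Fin N,
        ∑ v ∈ (univ : Finset (Fin N)).erase u,
        k i j * k u v * g (({i, j, u, v} : Finset (Fin N)).card)
      = ∑ i : Fin N, ∑ j ∈ (univ : Finset (Fin N)).erase i,
        (k i j * k i j * g 2 + k i j * k j i * g 2
          + (∑ v ∈ ((univ : Finset (Fin N)).erase i).erase j, k i j * k i v) * g 3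
          + (∑ v ∈ ((univ : Finset (Fin N)).erase i).erase j, k i j * k j v) * g 3
          + (∑ u ∈ ((univ : Finset (Fin N)).erase i).erase j, k i j * k u i) * g 3
          + (∑ u ∈ ((univ : Finset (Fin N)).erase i).erase j, k i j * k u j) * g 3
          + ∑ u ∈ ((univ : Finset (Fin N)).erase i).erase j,
              ∑ v ∈ (((univ : Finset (Fin N)).erase i).erase j).erase u,
                k i j * k u v * g 4) :=
    Finset.sum_congr rfl fun i _ => Finset.sum_congr rfl fun j hj =>
      inner i j (Finset.mem_erase.mp hj).1
  rw [step]
  simp only [Finset.sum_add_distrib]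
  have hT1 : ∑ i : Fin N, ∑ j ∈ (univ : Finset (Fin N)).erase i, k i j * k i j * g 2
      = kA N k * g 2 := by
    simp only [← Finset.sum_mul]
    rw [kA]
    congr 1
    exact Finset.sum_congr rfl fun i _ => Finset.sum_congr rfl fun j _ => (pow_two (k i j)).symm
  have hT2 : ∑ i : Fin N, ∑ j ∈ (univ : Finset (Fin N)).erase i, k i j * k j i * g 2
      = kA N k * g 2 := by
    rw [← hT1]
    exact Finset.sum_congr rfl fun i _ => Finset.sum_congr rfl fun j _ => by rw [hsym j i]
  have hT3 : ∑ i : Fin N, ∑ j ∈ (univ : Finset (Fin N)).erase i,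
      (∑ v ∈ ((univ : Finset (Fin N)).erase i).erase j, k i j * k i v) * g 3
      = kB N k * g 3 := by
    simp only [← Finset.sum_mul]
    rw [kB]
  have hT4 : ∑ i : Fin N, ∑ j ∈ (univ : Finset (Fin N)).erase i,
      (∑ v ∈ ((univ : Finset (Fin N)).erase i).erase j, k i j * k j v) * g 3
      = kB N k * g 3 := by
    rw [sum_pair_swap N (fun i j =>
      (∑ v ∈ ((univ : Finset (Fin N)).erase i).erase j, k i j * k j v) * g 3)]
    rw [← hT3]
    refine Finset.sum_congr rfl fun i _ => Finset.sum_congr rfl fun j _ => ?_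
    rw [Finset.erase_right_comm]
    congr 1
    exact Finset.sum_congr rfl fun v _ => by rw [hsym j i]
  have hT5 : ∑ i : Fin N, ∑ j ∈ (univ : Finset (Fin N)).erase i,
      (∑ u ∈ ((univ : Finset (Fin N)).erase i).erase j, k i j * k u i) * g 3
      = kB N k * g 3 := by
    rw [← hT3]
    refine Finset.sum_congr rfl fun i _ => Finset.sum_congr rfl fun j _ => ?_
    congr 1
    exact Finset.sum_congr rfl fun u _ => by rw [hsym u i]
  have hT6 : ∑ i : Fin N, ∑ j ∈ (univ : Finset (Fin N)).erase i,
      (∑ u ∈ ((univ : Finset (Fin N)).erase i).erase j, k i j * k u j) * g 3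
      = kB N k * g 3 := by
    rw [← hT4]
    refine Finset.sum_congr rfl fun i _ => Finset.sum_congr rfl fun j _ => ?_
    congr 1
    exact Finset.sum_congr rfl fun u _ => by rw [hsym u j]
  have hT7 : ∑ i : Fin N, ∑ j ∈ (univ : Finset (Fin N)).erase i,
      ∑ u ∈ ((univ : Finset (Fin N)).erase i).erase j,
        ∑ v ∈ (((univ : Finset (Fin N)).erase i).erase j).erase u, k i j * k u v * g 4
      = kC N k * g 4 := by
    simp only [← Finset.sum_mul]
    rw [kC]
  rw [hT1, hT2, hT3, hT4, hT5, hT6, hT7]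
  ring

lemma pexp_beta_sq (m n : ℕ) (hm : 2 ≤ m) (hn : 2 ≤ n)
    (k : Fin (m+n) → Fin (m+n) → ℝ) (hsym : ∀ i j, k i j = k j i) :
    pexp (m + n) m (fun S => betaStat (m + n) n k S ^ 2)
      = (2 * kA (m + n) k * (((n : ℝ) * ((n : ℝ) - 1)) / (((m : ℝ) + (n : ℝ)) * (((m : ℝ) + (n : ℝ)) - 1))) + 4 * kB (m + n) k * (((n : ℝ) * ((n : ℝ) - 1) * ((n : ℝ) - 2)) / (((m : ℝ) + (n : ℝ)) * (((m : ℝ) + (n : ℝ)) - 1) * (((m : ℝ) + (n : ℝ)) - 2))) + kC (m + n) k * (((n : ℝ) * ((n : ℝ) - 1) * ((n : ℝ) - 2) * ((n : ℝ) - 3)) / (((m : ℝ) + (n : ℝ)) * (((m : ℝ) + (n : ℝ)) - 1) * (((m : ℝ) + (n : ℝ)) - 2) * (((m : ℝ) + (n : ℝ)) - 3)))) / ((n : ℝ) ^ 2 * ((n : ℝ) - 1) ^ 2) := by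
  classical
  set g : ℕ → ℝ := fun t => ((((m+n) - t).choose m : ℕ) : ℝ) with hg
  have expand : ∀ S : Finset (Fin (m+n)),
      (∑ i : Fin (m+n), ∑ j ∈ (univ : Finset (Fin (m+n))).erase i, chi S i * chi S j * k i j) ^ 2
      = ∑ i : Fin (m+n), ∑ u : Fin (m+n), ∑ j ∈ (univ : Finset (Fin (m+n))).erase i,
          ∑ v ∈ (univ : Finset (Fin (m+n))).erase u,
          (if Disjoint ({i, j, u, v} : Finset (Fin (m+n))) S then (1:ℝ) else 0)
            * (k i j * k u v) := by
    intro S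
    rw [pow_two, Finset.sum_mul_sum]
    refine Finset.sum_congr rfl fun i _ => Finset.sum_congr rfl fun u _ => ?_
    rw [Finset.sum_mul_sum]
    exact Finset.sum_congr rfl fun j _ => Finset.sum_congr rfl fun v _ => chi_quad S i j u v _ _
  have key : ∑ S ∈ Finset.powersetCard m (univ : Finset (Fin (m+n))), betaStat (m+n) n k S ^ 2
      = ((n : ℝ) * ((n : ℝ) - 1))⁻¹ ^ 2
        * (2 * kA (m+n) k * g 2 + 4 * kB (m+n) k * g 3 + kC (m+n) k * g 4) := by
    simp_rw [beta_chi (m+n) n k, mul_pow]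
    rw [← Finset.mul_sum]
    congr 1
    have swap : ∑ S ∈ Finset.powersetCard m (univ : Finset (Fin (m+n))),
        ∑ i : Fin (m+n), ∑ u : Fin (m+n), ∑ j ∈ (univ : Finset (Fin (m+n))).erase i,
          ∑ v ∈ (univ : Finset (Fin (m+n))).erase u,
          (if Disjoint ({i, j, u, v} : Finset (Fin (m+n))) S then (1:ℝ) else 0)
            * (k i j * k u v)
        = ∑ i : Fin (m+n), ∑ u : Fin (m+n), ∑ j ∈ (univ : Finset (Fin (m+n))).erase i,
          ∑ v ∈ (univ : Finset (Fin (m+n))).erase u,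
          ∑ S ∈ Finset.powersetCard m (univ : Finset (Fin (m+n))),
          (if Disjoint ({i, j, u, v} : Finset (Fin (m+n))) S then (1:ℝ) else 0)
            * (k i j * k u v) := by
      rw [Finset.sum_comm]
      refine Finset.sum_congr rfl fun i _ => ?_
      rw [Finset.sum_comm]
      refine Finset.sum_congr rfl fun u _ => ?_
      rw [Finset.sum_comm]
      refine Finset.sum_congr rfl fun j _ => ?_
      rw [Finset.sum_comm]
    calc ∑ S ∈ Finset.powersetCard m (univ : Finset (Fin (m+n))),
          (∑ i : Fin (m+n), ∑ j ∈ (univ : Finset (Fin (m+n))).erase i,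
            chi S i * chi S j * k i j) ^ 2
        = ∑ i : Fin (m+n), ∑ u : Fin (m+n), ∑ j ∈ (univ : Finset (Fin (m+n))).erase i,
            ∑ v ∈ (univ : Finset (Fin (m+n))).erase u,
            ∑ S ∈ Finset.powersetCard m (univ : Finset (Fin (m+n))),
            (if Disjoint ({i, j, u, v} : Finset (Fin (m+n))) S then (1:ℝ) else 0)
              * (k i j * k u v) := by
          rw [← swap]
          exact Finset.sum_congr rfl fun S _ => expand S
      _ = ∑ i : Fin (m+n), ∑ u : Fin (m+n), ∑ j ∈ (univ : Finset (Fin (m+n))).erase i,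
            ∑ v ∈ (univ : Finset (Fin (m+n))).erase u,
            k i j * k u v * g (({i, j, u, v} : Finset (Fin (m+n))).card) := by
          refine Finset.sum_congr rfl fun i _ => Finset.sum_congr rfl fun u _ =>
            Finset.sum_congr rfl fun j _ => Finset.sum_congr rfl fun v _ => ?_
          rw [← Finset.sum_mul, sum_ind]
          rw [hg]
          ring
      _ = ∑ i : Fin (m+n), ∑ j ∈ (univ : Finset (Fin (m+n))).erase i, ∑ u : Fin (m+n),
            ∑ v ∈ (univ : Finset (Fin (m+n))).erase u,
            k i j * k u v * g (({i, j, u, v} : Finset (Fin (m+n))).card) := by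
          exact Finset.sum_congr rfl fun i _ => Finset.sum_comm
      _ = 2 * kA (m+n) k * g 2 + 4 * kB (m+n) k * g 3 + kC (m+n) k * g 4 :=
          quad_split (m+n) k hsym g
  have hchoose : (((m+n).choose m : ℕ) : ℝ) ≠ 0 :=
    Nat.cast_ne_zero.mpr (Nat.choose_pos (Nat.le_add_right m n)).ne'
  have hpn : ∀ t : ℕ, ∏ i ∈ Finset.range t, ((n:ℝ) - i)
      = ∏ i ∈ Finset.range t, ((n:ℝ) - i) := fun _ => rfl
  have h2 : g 2 / (((m+n).choose m : ℕ) : ℝ)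
      = ((n : ℝ) * ((n : ℝ) - 1)) / (((m : ℝ) + (n : ℝ)) * (((m : ℝ) + (n : ℝ)) - 1)) := by
    rw [hg, ratioDiv m n 2 hm hn (by norm_num)]
    norm_num [Finset.prod_range_succ]
  have h3 : g 3 / (((m+n).choose m : ℕ) : ℝ)
      = ((n : ℝ) * ((n : ℝ) - 1) * ((n : ℝ) - 2))
        / (((m : ℝ) + (n : ℝ)) * (((m : ℝ) + (n : ℝ)) - 1) * (((m : ℝ) + (n : ℝ)) - 2)) := by
    rw [hg, ratioDiv m n 3 hm hn (by norm_num)]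
    norm_num [Finset.prod_range_succ]
  have h4 : g 4 / (((m+n).choose m : ℕ) : ℝ)
      = ((n : ℝ) * ((n : ℝ) - 1) * ((n : ℝ) - 2) * ((n : ℝ) - 3))
        / (((m : ℝ) + (n : ℝ)) * (((m : ℝ) + (n : ℝ)) - 1) * (((m : ℝ) + (n : ℝ)) - 2)
            * (((m : ℝ) + (n : ℝ)) - 3)) := by
    rw [hg, ratioDiv m n 4 hm hn (by norm_num)]
    norm_num [Finset.prod_range_succ]
  rw [pexp, key]
  rw [show ((n : ℝ) * ((n : ℝ) - 1))⁻¹ ^ 2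
        * (2 * kA (m+n) k * g 2 + 4 * kB (m+n) k * g 3 + kC (m+n) k * g 4)
        / (((m+n).choose m : ℕ) : ℝ)
      = ((n : ℝ) * ((n : ℝ) - 1))⁻¹ ^ 2
        * (2 * kA (m+n) k * (g 2 / (((m+n).choose m : ℕ) : ℝ))
          + 4 * kB (m+n) k * (g 3 / (((m+n).choose m : ℕ) : ℝ))
          + kC (m+n) k * (g 4 / (((m+n).choose m : ℕ) : ℝ))) from by ring]
  rw [h2, h3, h4, inv_pow, mul_pow, inv_mul_eq_div]

end PermNullAux

open PermNullAux

/-- Under the permutation null, `var(β) = (2A f₁(n) + 4B f₂(n) + C f₃(n))/(n²(n−1)²) − k̄²`. -/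
theorem variance_beta (m n : ℕ) (hm : 2 ≤ m) (hn : 2 ≤ n)
    (k : Fin (m + n) → Fin (m + n) → ℝ) (hsym : ∀ i j, k i j = k j i) :
    pvar (m + n) m (betaStat (m + n) n k) =
      (2 * kA (m + n) k * (((n : ℝ) * ((n : ℝ) - 1)) / (((m : ℝ) + (n : ℝ)) * (((m : ℝ) + (n : ℝ)) - 1))) + 4 * kB (m + n) k * (((n : ℝ) * ((n : ℝ) - 1) * ((n : ℝ) - 2)) / (((m : ℝ) + (n : ℝ)) * (((m : ℝ) + (n : ℝ)) - 1) * (((m : ℝ) + (n : ℝ)) - 2))) + kC (m + n) k * (((n : ℝ) * ((n : ℝ) - 1) * ((n : ℝ) - 2) * ((n : ℝ) - 3)) / (((m : ℝ) + (n : ℝ)) * (((m : ℝ) + (n : ℝ)) - 1) * (((m : ℝ) + (n : ℝ)) - 2) * (((m : ℝ) + (n : ℝ)) - 3)))) / ((n : ℝ) ^ 2 * ((n : ℝ) - 1) ^ 2)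
        - (kbar (m + n) k) ^ 2 := by
  rw [pvar_eq (m + n) m (Nat.le_add_right m n), pexp_beta m n hm hn k,
    pexp_beta_sq m n hm hn k hsym]
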